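/- Let δ be a locally nilpotent q-skew σ-derivation on a k-algebra R, a ∈ R with N = nildeg(a), and n > N. Define F_i(a) = [n choose i]_q σ^i(δ^{n−i}(a)) for 0 ≤ i ≤ n. Then for any m ≥ 1 and any indices i_1,…,i_{m−1} ∈ {0,…,n}, the nilpotency degree of a·F_{i_{m−1}}(a·F_{i_{m−2}}(⋯a·F_{i_1}(a)⋯)) is at most m·N − (m−1)·n + Σ_{k=1}^{m−1} i_k (whenever this quantity is nonnegative; if it is negative the element is zero). -/

import Mathlib

/-- The Gaussian (q-)binomial coefficient `[n choose i]_q`. -/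
def qBinom {k : Type*} [Field k] (q : k) : ℕ → ℕ → k
  | _, 0 => 1
  | 0, _ + 1 => 0
  | n + 1, i + 1 => qBinom q n i + q ^ (i + 1) * qBinom q n (i + 1)

/-- The nested product `a·F_{i_{m−1}}(a·F_{i_{m−2}}(⋯ a·F_{i_1}(a)⋯))`. -/
def nestProd {R : Type*} [Ring R] (a : R) (F : ℕ → R → R) : List ℕ → R
  | [] => a
  | i :: t => a * F i (nestProd a F t)

/-- The nilpotency degree: the least `N` with `δ^[N] a = 0`. -/
noncomputable def nildeg {R : Type*} [Ring R] (δ : R → R) (a : R) : ℕ :=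
  sInf {N : ℕ | δ^[N] a = 0}

section Aux
variable {k : Type*} [Field k] {R : Type*} [Ring R] [Algebra k R]
variable (σ : R ≃ₐ[k] R) (δ : R →ₗ[k] R)

lemma qBinom_zero_right (q : k) (n : ℕ) : qBinom q n 0 = 1 := by cases n <;> rfl

lemma qBinom_eq_zero (q : k) : ∀ {n i : ℕ}, n < i → qBinom q n i = 0
  | 0, _+1, _ => rfl
  | n+1, i+1, h => by
      have h1 : n < i := by omega
      have h2 : n < i + 1 := by omega
      simp [qBinom, qBinom_eq_zero q h1, qBinom_eq_zero q h2]

lemma iter_smul (j : ℕ) (c : k) (z : R) : (⇑δ)^[j] (c • z) = c • (⇑δ)^[j] z := by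
  rw [← Module.End.pow_apply, ← Module.End.pow_apply, map_smul]

lemma iter_zero (j : ℕ) : (⇑δ)^[j] (0 : R) = 0 := Function.iterate_fixed (map_zero δ) j

lemma sigma_iter_zero (i : ℕ) : (⇑σ)^[i] (0 : R) = 0 := Function.iterate_fixed (map_zero σ) i

lemma sigma_iter_smul (i : ℕ) (c : k) (z : R) : (⇑σ)^[i] (c • z) = c • (⇑σ)^[i] z := by
  induction i generalizing z with
  | zero => simp
  | succ i ih => simp [Function.iterate_succ_apply, map_smul, ih]

lemma iter_eventually_zero {M N : ℕ} {x : R} (hx : (⇑δ)^[N] x = 0) (h : N ≤ M) :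
    (⇑δ)^[M] x = 0 := by
  have : M = (M - N) + N := by omega
  rw [this, Function.iterate_add_apply, hx, iter_zero]

variable (q : k) (hq : ∀ a : R, q • σ (δ a) = δ (σ a))

include hq in
lemma delta_sigma_iter (i : ℕ) (z : R) :
    δ ((⇑σ)^[i] z) = q ^ i • (⇑σ)^[i] (δ z) := by
  induction i generalizing z with
  | zero => simp
  | succ i ih =>
    rw [Function.iterate_succ_apply, ih, ← hq, sigma_iter_smul, smul_smul, pow_succ,
      ← Function.iterate_succ_apply]

include hq in
lemma iter_delta_sigma_iter (i j : ℕ) (z : R) :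
    (⇑δ)^[j] ((⇑σ)^[i] z) = q ^ (i*j) • (⇑σ)^[i] ((⇑δ)^[j] z) := by
  induction j generalizing z with
  | zero => simp
  | succ j ih =>
    rw [Function.iterate_succ_apply', ih, map_smul, delta_sigma_iter σ δ q hq,
      smul_smul, ← pow_add, Function.iterate_succ_apply' (⇑δ) j z,
      show i * j + i = i * (j + 1) from by ring]

variable (hleib : ∀ a b : R, δ (a * b) = σ a * δ b + δ a * b)

include hq hleib in
lemma qLeibniz (x y : R) (M : ℕ) :
    (⇑δ)^[M] (x * y) =
      ∑ j ∈ Finset.range (M+1), qBinom q M j •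
        ((⇑σ)^[j] ((⇑δ)^[M-j] x) * (⇑δ)^[j] y) := by
  induction M with
  | zero => simp [qBinom_zero_right]
  | succ M ih =>
    rw [Function.iterate_succ_apply', ih, map_sum]
    have step : ∀ j ∈ Finset.range (M+1),
        δ (qBinom q M j • ((⇑σ)^[j] ((⇑δ)^[M-j] x) * (⇑δ)^[j] y)) =
        qBinom q M j • ((⇑σ)^[j+1] ((⇑δ)^[M+1-(j+1)] x) * (⇑δ)^[j+1] y)
        + (q^j * qBinom q M j) • ((⇑σ)^[j] ((⇑δ)^[M+1-j] x) * (⇑δ)^[j] y) := by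
      intro j hj
      simp only [Finset.mem_range] at hj
      have e1 : (⇑σ)^[j+1] ((⇑δ)^[M+1-(j+1)] x) = σ ((⇑σ)^[j] ((⇑δ)^[M-j] x)) := by
        rw [show M+1-(j+1) = M - j from by omega, Function.iterate_succ_apply' (⇑σ)]
      have e2 : (⇑δ)^[j+1] y = δ ((⇑δ)^[j] y) := Function.iterate_succ_apply' (⇑δ) j y
      have e3 : δ ((⇑σ)^[j] ((⇑δ)^[M-j] x)) = q^j • (⇑σ)^[j] ((⇑δ)^[M+1-j] x) := by
        rw [delta_sigma_iter σ δ q hq]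
        congr 2
        rw [show M+1-j = (M-j)+1 by omega, Function.iterate_succ_apply']
      rw [map_smul, hleib, smul_add, e3, e1, e2, smul_mul_assoc, smul_smul,
        mul_comm (qBinom q M j) (q^j)]
    rw [Finset.sum_congr rfl step, Finset.sum_add_distrib]
    -- RHS: peel the first term
    rw [Finset.sum_range_succ' (fun j => qBinom q (M+1) j •
        ((⇑σ)^[j] ((⇑δ)^[M+1-j] x) * (⇑δ)^[j] y))]
    have expand : ∀ j ∈ Finset.range (M+1),
        qBinom q (M+1) (j+1) • ((⇑σ)^[j+1] ((⇑δ)^[M+1-(j+1)] x) * (⇑δ)^[j+1] y)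
        = qBinom q M j • ((⇑σ)^[j+1] ((⇑δ)^[M+1-(j+1)] x) * (⇑δ)^[j+1] y)
          + (q^(j+1) * qBinom q M (j+1)) • ((⇑σ)^[j+1] ((⇑δ)^[M+1-(j+1)] x) * (⇑δ)^[j+1] y) := by
      intro j _
      rw [← add_smul]
      rfl
    rw [Finset.sum_congr rfl expand, Finset.sum_add_distrib]
    have second : ∑ j ∈ Finset.range (M+1),
        (q^j * qBinom q M j) • ((⇑σ)^[j] ((⇑δ)^[M+1-j] x) * (⇑δ)^[j] y)
        = ∑ j ∈ Finset.range (M+1),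
        (q^(j+1) * qBinom q M (j+1)) • ((⇑σ)^[j+1] ((⇑δ)^[M+1-(j+1)] x) * (⇑δ)^[j+1] y)
        + qBinom q (M+1) 0 • ((⇑σ)^[0] ((⇑δ)^[M+1-0] x) * (⇑δ)^[0] y) := by
      rw [Finset.sum_range_succ' (fun j => (q^j * qBinom q M j) •
          ((⇑σ)^[j] ((⇑δ)^[M+1-j] x) * (⇑δ)^[j] y))]
      rw [Finset.sum_range_succ (fun j => (q ^ (j + 1) * qBinom q M (j + 1)) •
          ((⇑σ)^[j + 1] ((⇑δ)^[M + 1 - (j + 1)] x) * (⇑δ)^[j + 1] y))]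
      rw [qBinom_eq_zero q (by omega : M < M+1), mul_zero, zero_smul, add_zero,
        pow_zero, one_mul, qBinom_zero_right, qBinom_zero_right]
    rw [second]
    abel
end Aux
section Main
variable {k : Type*} [Field k] {R : Type*} [Ring R] [Algebra k R]
variable (σ : R ≃ₐ[k] R) (δ : R →ₗ[k] R) (q : k)
variable (hq : ∀ a : R, q • σ (δ a) = δ (σ a))
variable (hleib : ∀ a b : R, δ (a * b) = σ a * δ b + δ a * b)

include hq hleib in
lemma main_bound (a : R) (N : ℕ) (ha : (⇑δ)^[N] a = 0) (n : ℕ) :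
    ∀ (t : List ℕ), (∀ i ∈ t, i ≤ n) → ∀ M : ℕ,
      ((t.length : ℤ) + 1) * N - (t.length : ℤ) * n + (t.map Int.ofNat).sum ≤ M →
      (⇑δ)^[M] (nestProd a (fun i b => qBinom q n i • (⇑σ)^[i] ((⇑δ)^[n - i] b)) t) = 0 := by
  intro t
  induction t with
  | nil =>
    intro _ M hM
    simp only [List.length_nil, List.map_nil, List.sum_nil, Nat.cast_zero] at hM
    have hNM : N ≤ M := by
      have : (N : ℤ) ≤ M := by linarith
      omega
    exact iter_eventually_zero δ ha hNM
  | cons i s ih =>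
    intro ht M hM
    have hi : i ≤ n := ht i List.mem_cons_self
    have hts : ∀ j ∈ s, j ≤ n := fun j hj => ht j (List.mem_cons_of_mem i hj)
    set P := nestProd a (fun i b => qBinom q n i • (⇑σ)^[i] ((⇑δ)^[n - i] b)) s with hP
    show (⇑δ)^[M] (a * (qBinom q n i • (⇑σ)^[i] ((⇑δ)^[n - i] P))) = 0
    rw [qLeibniz σ δ q hq hleib]
    apply Finset.sum_eq_zero
    intro j hj
    simp only [Finset.mem_range] at hj
    by_cases hcase : N ≤ M - j
    · rw [iter_eventually_zero δ ha hcase, sigma_iter_zero, zero_mul, smul_zero]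
    · -- second factor vanishes
      set S := (s.map Int.ofNat).sum with hS
      have hQ : ((s.length : ℤ) + 1) * N - (s.length : ℤ) * n + S ≤ (j + (n - i) : ℕ) := by
        simp only [List.length_cons, List.map_cons, List.sum_cons, ← hS] at hM
        have hjM : (j : ℤ) ≤ M := by omega
        have hMN : (M : ℤ) - j < N := by omega
        have hni : ((j + (n - i) : ℕ) : ℤ) = (j : ℤ) + n - i := by omega
        rw [hni]
        have hIi : (Int.ofNat i : ℤ) = (i : ℤ) := rfl
        rw [hIi] at hM
        push_cast at hM ⊢
        ring_nf at hM ⊢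
        linarith
      have h0 : (⇑δ)^[j + (n - i)] P = 0 := ih hts _ hQ
      rw [iter_smul, iter_delta_sigma_iter σ δ q hq,
        ← Function.iterate_add_apply, h0, sigma_iter_zero, smul_zero, smul_zero,
        mul_zero, smul_zero]
end Main

/-- Nilpotency-degree bound for iterated products: with `N = nildeg a` and `n > N`,
the nilpotency degree of `a·F_{i_{m−1}}(⋯ a·F_{i_1}(a)⋯)` is at most
`m·N − (m−1)·n + Σ i_k` when this is nonnegative; when it is negative the element is `0`. -/
theorem nildeg_nestProd_bound {k : Type*} [Field k] {R : Type*} [Ring R] [Algebra k R]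
    (σ : R ≃ₐ[k] R) (δ : R →ₗ[k] R)
    (hleib : ∀ a b : R, δ (a * b) = σ a * δ b + δ a * b)
    (q : k) (hq0 : q ≠ 0)
    (hq : ∀ a : R, q • σ (δ a) = δ (σ a))
    (hln : ∀ a : R, ∃ n : ℕ, (⇑δ)^[n] a = 0)
    (a : R) (N : ℕ) (hN : N = nildeg (⇑δ) a) (n : ℕ) (hn : N < n)
    (m : ℕ) (hm : 1 ≤ m) (ι : Fin (m - 1) → Fin (n + 1)) :
    let elem := nestProd a (fun i b => qBinom q n i • (⇑σ)^[i] ((⇑δ)^[n - i] b))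
      (List.ofFn (fun j => (ι j : ℕ)))
    let Q : ℤ := (m : ℤ) * N - ((m : ℤ) - 1) * n + ∑ j, ((ι j : ℕ) : ℤ)
    (0 ≤ Q → (nildeg (⇑δ) elem : ℤ) ≤ Q) ∧ (Q < 0 → elem = 0) := by
  intro elem Q
  have ha : (⇑δ)^[N] a = 0 := by
    rw [hN]
    exact Nat.sInf_mem (hln a)
  set t : List ℕ := List.ofFn (fun j => (ι j : ℕ)) with htdef
  have htn : ∀ i ∈ t, i ≤ n := by
    intro i hi
    rw [htdef] at hi
    simp only [List.mem_ofFn, Set.mem_range] at hi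
    obtain ⟨j, hj⟩ := hi
    rw [← hj]
    exact Nat.lt_succ_iff.mp (ι j).isLt
  have hlen : (t.length : ℤ) = (m : ℤ) - 1 := by
    rw [htdef, List.length_ofFn]
    omega
  have hsum : (t.map Int.ofNat).sum = ∑ j, ((ι j : ℕ) : ℤ) := by
    rw [htdef, List.map_ofFn, List.sum_ofFn]
    rfl
  have hQ : Q = ((t.length : ℤ) + 1) * N - (t.length : ℤ) * n + (t.map Int.ofNat).sum := by
    rw [hlen, hsum]
    show (m : ℤ) * N - ((m : ℤ) - 1) * n + _ = _
    ring
  have key := main_bound σ δ q hq hleib a N ha n t htn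
  constructor
  · intro h0
    have h1 : (⇑δ)^[Q.toNat] elem = 0 := key Q.toNat (by rw [← hQ]; omega)
    have h2 : nildeg (⇑δ) elem ≤ Q.toNat := Nat.sInf_le h1
    omega
  · intro h0
    have h1 : (⇑δ)^[0] elem = 0 := key 0 (by rw [← hQ]; push_cast; omega)
    simpa using h1
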